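/- Let X, Y ⊂ R^n be closed convex with S = X ∩ Y ≠ ∅ satisfying the error bound ω·dist(z,S) ≤ max{dist(z,X),dist(z,Y)} near the limit point z̄ of the ecCRM iterates. Then the ecCRM sequence (z_k) converges Q-linearly to z̄ with ratio at most (1 + ω²/4)^{−1/2}: eventually ‖z_{k+1} − z̄‖ ≤ (1+ω²/4)^{−1/2}·‖z_k − z̄‖. -/
import Mathlib


open Metric Filter Topology
open scoped RealInnerProductSpace

section auxlem

variable {E : Type*} [NormedAddCommGroup E] [InnerProductSpace ℝ E]

lemma aux_pyth {w c s : E} (h : ⟪w - c, s - c⟫ ≤ 0) :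
    ‖w - c‖ ^ 2 + ‖c - s‖ ^ 2 ≤ ‖w - s‖ ^ 2 := by
  have h1 : ‖(w - c) + (c - s)‖ ^ 2
      = ‖w - c‖ ^ 2 + 2 * ⟪w - c, c - s⟫ + ‖c - s‖ ^ 2 := norm_add_sq_real _ _
  have h2 : (w - c) + (c - s) = w - s := by abel
  have h3 : ⟪w - c, c - s⟫ = - ⟪w - c, s - c⟫ := by
    rw [← inner_neg_right]; congr 1; abel
  rw [h2] at h1
  have h4 : 0 ≤ ⟪w - c, c - s⟫ := by rw [h3]; linarith
  linarith

lemma aux_le_of_sq_le {a b : ℝ} (ha : 0 ≤ a) (hb : 0 ≤ b) (h : a ^ 2 ≤ b ^ 2) : a ≤ b := by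
  nlinarith

lemma aux_dist_le (c q w : E) (h : ⟪c - q, w - q⟫ ≤ 0) : ‖c - q‖ ≤ ‖c - w‖ := by
  have key := aux_pyth (w := c) (c := q) (s := w) h
  exact aux_le_of_sq_le (norm_nonneg _) (norm_nonneg _) (by nlinarith [sq_nonneg ‖q - w‖])

lemma aux_proj_le {u p s : E} (h : ⟪u - p, s - p⟫ ≤ 0) : ‖p - s‖ ≤ ‖u - s‖ := by
  have key := aux_pyth (w := u) (c := p) (s := s) h
  exact aux_le_of_sq_le (norm_nonneg _) (norm_nonneg _) (by nlinarith [sq_nonneg ‖u - p‖])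

end auxlem

theorem stmt_17 {n : ℕ} {X Y : Set (EuclideanSpace ℝ (Fin n))}
    (hXc : IsClosed X) (hXconv : Convex ℝ X)
    (hYc : IsClosed Y) (hYconv : Convex ℝ Y)
    (hS : (X ∩ Y).Nonempty)
    (PX PY : EuclideanSpace ℝ (Fin n) → EuclideanSpace ℝ (Fin n))
    (hPX : ∀ u, PX u ∈ X ∧ ∀ x ∈ X, ⟪u - PX u, x - PX u⟫ ≤ 0)
    (hPY : ∀ u, PY u ∈ Y ∧ ∀ x ∈ Y, ⟪u - PY u, x - PY u⟫ ≤ 0)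
    (T : EuclideanSpace ℝ (Fin n) → EuclideanSpace ℝ (Fin n))
    (hTY : ∀ u, T u ∈ Y)
    (hTqne : ∀ u, ∀ s ∈ X ∩ Y, ‖T u - s‖ ≤ ‖u - s‖)
    (C : EuclideanSpace ℝ (Fin n) → EuclideanSpace ℝ (Fin n))
    (hC : ∀ w : EuclideanSpace ℝ (Fin n), ⟪w - PX w, w - PY w⟫ ≤ 0 →
      C w ∈ {v | ⟪v - PX w, w - PX w⟫ ≤ 0} ∩ {v | ⟪v - PY w, w - PY w⟫ ≤ 0} ∧
      ∀ v ∈ {v | ⟪v - PX w, w - PX w⟫ ≤ 0} ∩ {v | ⟪v - PY w, w - PY w⟫ ≤ 0},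
        ⟪w - C w, v - C w⟫ ≤ 0)
    (α : ℕ → ℝ) (hα : ∀ k, α k ∈ Set.Ioo (0:ℝ) 1)
    (z : ℕ → EuclideanSpace ℝ (Fin n))
    (hz : ∀ k, z (k+1) = C (α k • T (z k) + (1 - α k) • PX (T (z k))))
    (zbar : EuclideanSpace ℝ (Fin n)) (hzbar : zbar ∈ X ∩ Y)
    (hlim : Tendsto z atTop (𝓝 zbar))
    (V : Set (EuclideanSpace ℝ (Fin n))) (hV : V ∈ 𝓝 zbar)
    (ω : ℝ) (hω : ω ∈ Set.Ioo (0:ℝ) 1)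
    (hEB : ∀ v ∈ V, ω * infDist v (X ∩ Y) ≤ max (infDist v X) (infDist v Y)) :
    ∃ K : ℕ, ∀ k ≥ K,
      ‖z (k+1) - zbar‖ ≤ (Real.sqrt (1 + ω ^ 2 / 4))⁻¹ * ‖z k - zbar‖ := by
  have hScl : IsClosed (X ∩ Y) := hXc.inter hYc
  -- key per-iteration inequality
  have key : ∀ k, ∀ s ∈ X ∩ Y,
      ‖z (k+1) - s‖ ^ 2 + max (infDist (z (k+1)) X) (infDist (z (k+1)) Y) ^ 2
        ≤ ‖z k - s‖ ^ 2 := by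
    intro k s hs
    obtain ⟨hα0, hα1⟩ := hα k
    set u := T (z k) with hu
    set w := α k • u + (1 - α k) • PX u with hw
    have hzk : z (k+1) = C w := by rw [hw, hu]; exact hz k
    have hpu : PX u ∈ X := (hPX u).1
    have hwp : w - PX u = α k • (u - PX u) := by rw [hw]; module
    -- PX w = PX u
    have hPXw : PX w = PX u := by
      have h1 : ⟪w - PX w, PX u - PX w⟫ ≤ 0 := (hPX w).2 _ hpu
      have h2 : ⟪w - PX u, PX w - PX u⟫ ≤ 0 := by
        rw [hwp, real_inner_smul_left]
        exact mul_nonpos_of_nonneg_of_nonpos hα0.le ((hPX u).2 _ (hPX w).1)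
      have h3 : ⟪PX w - PX u, PX w - PX u⟫ ≤ 0 := by
        have he : ⟪PX w - PX u, PX w - PX u⟫
            = ⟪w - PX u, PX w - PX u⟫ - ⟪w - PX w, PX w - PX u⟫ := by
          rw [← inner_sub_left]; congr 1; abel
        have h1' : 0 ≤ ⟪w - PX w, PX w - PX u⟫ := by
          have hne : ⟪w - PX w, PX u - PX w⟫ = - ⟪w - PX w, PX w - PX u⟫ := by
            rw [← inner_neg_right]; congr 1; abel
          rw [hne] at h1; linarith
        rw [he]; linarith
      exact sub_eq_zero.mp (real_inner_self_nonpos.mp h3)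
    have huY : u ∈ Y := hTY (z k)
    -- the key angle condition for applying hC
    have hq : ⟪w - PX w, w - PY w⟫ ≤ 0 := by
      have h1 : ⟪w - PY w, u - PY w⟫ ≤ 0 := (hPY w).2 u huY
      have h2 : u - PY w = (1 - α k) • (u - PX u) + (w - PY w) := by rw [hw]; module
      have h3 : (1 - α k) * ⟪w - PY w, u - PX u⟫ + ⟪w - PY w, w - PY w⟫ ≤ 0 := by
        rw [← real_inner_smul_right, ← inner_add_right, ← h2]; exact h1
      have h4 : ⟪w - PY w, u - PX u⟫ ≤ 0 := by
        by_contra hcon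
        push_neg at hcon
        nlinarith [real_inner_self_nonneg (x := w - PY w)]
      have h5 : ⟪u - PX u, w - PY w⟫ ≤ 0 := by rw [real_inner_comm]; exact h4
      calc ⟪w - PX w, w - PY w⟫ = α k * ⟪u - PX u, w - PY w⟫ := by
            rw [hPXw, hwp, real_inner_smul_left]
        _ ≤ 0 := mul_nonpos_of_nonneg_of_nonpos hα0.le h5
    obtain ⟨hcmem, hcproj⟩ := hC w hq
    have hcx : ⟪C w - PX w, w - PX w⟫ ≤ 0 := hcmem.1
    have hcy : ⟪C w - PY w, w - PY w⟫ ≤ 0 := hcmem.2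
    -- s belongs to both halfspaces
    have hsx : ⟪s - PX w, w - PX w⟫ ≤ 0 := by
      rw [real_inner_comm]; exact (hPX w).2 s hs.1
    have hsy : ⟪s - PY w, w - PY w⟫ ≤ 0 := by
      rw [real_inner_comm]; exact (hPY w).2 s hs.2
    have hproj_s : ⟪w - C w, s - C w⟫ ≤ 0 := hcproj s ⟨hsx, hsy⟩
    have hA : ‖w - C w‖ ^ 2 + ‖C w - s‖ ^ 2 ≤ ‖w - s‖ ^ 2 := aux_pyth hproj_s
    -- distance estimates
    have hdx : infDist (C w) X ≤ ‖C w - w‖ :=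
      le_trans (by rw [← dist_eq_norm]; exact infDist_le_dist_of_mem (hPX w).1)
        (aux_dist_le _ _ _ hcx)
    have hdy : infDist (C w) Y ≤ ‖C w - w‖ :=
      le_trans (by rw [← dist_eq_norm]; exact infDist_le_dist_of_mem (hPY w).1)
        (aux_dist_le _ _ _ hcy)
    have hmax : max (infDist (C w) X) (infDist (C w) Y) ≤ ‖C w - w‖ := max_le hdx hdy
    have hmax0 : 0 ≤ max (infDist (C w) X) (infDist (C w) Y) :=
      le_max_of_le_left infDist_nonneg
    have hmaxsq : max (infDist (C w) X) (infDist (C w) Y) ^ 2 ≤ ‖w - C w‖ ^ 2 := by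
      rw [show ‖w - C w‖ = ‖C w - w‖ from norm_sub_rev _ _]
      exact pow_le_pow_left₀ hmax0 hmax 2
    -- w is not farther from s than z k
    have h_us : ‖u - s‖ ≤ ‖z k - s‖ := hTqne (z k) s hs
    have h_ps : ‖PX u - s‖ ≤ ‖u - s‖ := aux_proj_le ((hPX u).2 s hs.1)
    have hws : ‖w - s‖ ≤ ‖z k - s‖ := by
      have hsplit : w - s = α k • (u - s) + (1 - α k) • (PX u - s) := by rw [hw]; module
      calc ‖w - s‖ = ‖α k • (u - s) + (1 - α k) • (PX u - s)‖ := by rw [hsplit]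
        _ ≤ ‖α k • (u - s)‖ + ‖(1 - α k) • (PX u - s)‖ := norm_add_le _ _
        _ = α k * ‖u - s‖ + (1 - α k) * ‖PX u - s‖ := by
            rw [norm_smul, norm_smul, Real.norm_of_nonneg hα0.le,
              Real.norm_of_nonneg (by linarith)]
        _ ≤ α k * ‖z k - s‖ + (1 - α k) * ‖z k - s‖ :=
            add_le_add (mul_le_mul_of_nonneg_left h_us hα0.le)
              (mul_le_mul_of_nonneg_left (h_ps.trans h_us) (by linarith))
        _ = ‖z k - s‖ := by ring
    have hws2 : ‖w - s‖ ^ 2 ≤ ‖z k - s‖ ^ 2 := pow_le_pow_left₀ (norm_nonneg _) hws 2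
    rw [hzk]
    linarith
  -- Fejér monotonicity
  have fej : ∀ s ∈ X ∩ Y, ∀ k m : ℕ, k ≤ m → ‖z m - s‖ ≤ ‖z k - s‖ := by
    intro s hs k m hkm
    induction m, hkm using Nat.le_induction with
    | base => exact le_refl _
    | succ m hm ih =>
      have h1 := key m s hs
      have h2 : ‖z (m+1) - s‖ ^ 2 ≤ ‖z m - s‖ ^ 2 := by
        nlinarith [sq_nonneg (max (infDist (z (m+1)) X) (infDist (z (m+1)) Y))]
      exact le_trans (aux_le_of_sq_le (norm_nonneg _) (norm_nonneg _) h2) ih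
  -- half-distance estimate via the limit
  have halfway : ∀ k, ‖z k - zbar‖ ≤ 2 * infDist (z k) (X ∩ Y) := by
    intro k
    obtain ⟨s, hsS, hsd⟩ := hScl.exists_infDist_eq_dist hS (z k)
    have hlim2 : Tendsto (fun m => ‖z m - s‖) atTop (𝓝 ‖zbar - s‖) :=
      (hlim.sub tendsto_const_nhds).norm
    have hzs : ‖zbar - s‖ ≤ ‖z k - s‖ :=
      le_of_tendsto hlim2 (eventually_atTop.mpr ⟨k, fun m hm => fej s hsS k m hm⟩)
    have htri : ‖z k - zbar‖ ≤ ‖z k - s‖ + ‖zbar - s‖ := by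
      have : z k - zbar = (z k - s) - (zbar - s) := by abel
      rw [this]; exact norm_sub_le _ _
    have hd : infDist (z k) (X ∩ Y) = ‖z k - s‖ := by rw [hsd, dist_eq_norm]
    rw [hd]; linarith
  -- choose K with z k ∈ V for k ≥ K
  have hev : ∀ᶠ k in atTop, z k ∈ V := hlim.eventually (eventually_of_mem hV fun _ h => h)
  obtain ⟨K, hK⟩ := eventually_atTop.mp hev
  refine ⟨K, fun k hk => ?_⟩
  have hzV : z (k+1) ∈ V := hK (k+1) (by omega)
  have hEB' := hEB _ hzV
  have h1 := key k zbar hzbar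
  have h3 := halfway (k+1)
  set a := ‖z (k+1) - zbar‖ with ha
  set b := ‖z k - zbar‖ with hb
  set M := max (infDist (z (k+1)) X) (infDist (z (k+1)) Y) with hM
  have h4 : ω / 2 * a ≤ M := by
    have h5 : ω * a ≤ ω * (2 * infDist (z (k+1)) (X ∩ Y)) :=
      mul_le_mul_of_nonneg_left h3 hω.1.le
    nlinarith [hEB']
  have h5 : (ω / 2 * a) ^ 2 ≤ M ^ 2 :=
    pow_le_pow_left₀ (mul_nonneg (by linarith [hω.1.le]) (norm_nonneg _)) h4 2
  have h6 : a ^ 2 * (1 + ω ^ 2 / 4) ≤ b ^ 2 := by nlinarith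
  have hs1 : (0:ℝ) < 1 + ω ^ 2 / 4 := by positivity
  have hsq : 0 < Real.sqrt (1 + ω ^ 2 / 4) := Real.sqrt_pos.mpr hs1
  have h7 : (a * Real.sqrt (1 + ω ^ 2 / 4)) ^ 2 ≤ b ^ 2 := by
    rw [mul_pow, Real.sq_sqrt hs1.le]; linarith
  have h8 : a * Real.sqrt (1 + ω ^ 2 / 4) ≤ b :=
    aux_le_of_sq_le (mul_nonneg (norm_nonneg _) hsq.le) (norm_nonneg _) h7
  rw [inv_mul_eq_div, le_div_iff₀ hsq]
  exact h8
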